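/- Let n = 2s-l where 1 ≤ l < s, and let F ⊆ 2^[n] be a family closed upward with ν(F) < s. Then |2^[n] \ F| ≥ 2(s-l) + 2. -/

import Mathlib

/-- The family `F` contains `s` pairwise disjoint members. -/
def HasMatching {n : ℕ} (F : Finset (Finset (Fin n))) (s : ℕ) : Prop :=
  ∃ 𝒜 : Finset (Finset (Fin n)), 𝒜 ⊆ F ∧ 𝒜.card = s ∧
    (𝒜 : Set (Finset (Fin n))).Pairwise Disjoint

lemma pairs_lemma {n : ℕ} (F : Finset (Finset (Fin n))) (c : ℕ) :
    ∀ (m : ℕ) (B : Finset (Fin n)),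
      B.card = m + c →
      ((B.powersetCard 2).filter (fun P => P ∉ F)).card + c ≤ m →
      ∃ PP : Finset (Finset (Fin n)), PP.card = c ∧
        (∀ P ∈ PP, P ⊆ B ∧ P.card = 2 ∧ P ∈ F) ∧
        (PP : Set (Finset (Fin n))).Pairwise Disjoint := by
  induction c with
  | zero => exact fun m B _ _ => ⟨∅, by simp, by simp, by simp⟩
  | succ c ih =>
    intro m B hB hbad
    have hchoose : m + c ≤ (m + (c + 1)).choose 2 := by
      rw [Nat.choose_two_right]
      rw [Nat.le_div_iff_mul_le (by norm_num)]
      have h1 : m + (c + 1) - 1 = m + c := by omega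
      rw [h1]
      nlinarith
    have hsplit := Finset.card_filter_add_card_filter_not
      (s := B.powersetCard 2) (p := fun P => P ∉ F)
    rw [Finset.card_powersetCard, hB] at hsplit
    have hgoodpos : 0 < ((B.powersetCard 2).filter (fun P => ¬ P ∉ F)).card := by omega
    obtain ⟨P, hP⟩ := Finset.card_pos.1 hgoodpos
    have hPm := Finset.mem_filter.1 hP
    have hPpow := Finset.mem_powersetCard.1 hPm.1
    have hPB : P ⊆ B := hPpow.1
    have hP2 : P.card = 2 := hPpow.2
    have hPF : P ∈ F := not_not.1 hPm.2
    have hBP : (B \ P).card = (m - 1) + c := by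
      rw [Finset.card_sdiff_of_subset hPB, hB, hP2]; omega
    have hmono : ((B \ P).powersetCard 2).filter (fun Q => Q ∉ F) ⊆
        (B.powersetCard 2).filter (fun Q => Q ∉ F) :=
      Finset.filter_subset_filter _ (Finset.powersetCard_mono Finset.sdiff_subset)
    obtain ⟨PP, hc, hprops, hpair⟩ := ih (m - 1) (B \ P) hBP
      (by have := Finset.card_le_card hmono; omega)
    have hPnotmem : P ∉ PP := by
      intro h
      have hsub := (hprops P h).1
      have hne : P.Nonempty := Finset.card_pos.1 (by omega)
      obtain ⟨x, hx⟩ := hne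
      have hmem := hsub hx
      rw [Finset.mem_sdiff] at hmem
      exact hmem.2 hx
    refine ⟨insert P PP, ?_, ?_, ?_⟩
    · rw [Finset.card_insert_of_notMem hPnotmem, hc]
    · intro Q hQ
      rcases Finset.mem_insert.1 hQ with rfl | hQ'
      · exact ⟨hPB, hP2, hPF⟩
      · obtain ⟨h1, h2, h3⟩ := hprops Q hQ'
        exact ⟨h1.trans Finset.sdiff_subset, h2, h3⟩
    · rw [Finset.coe_insert,
        Set.pairwise_insert_of_symmetric]
      refine ⟨hpair, ?_⟩
      intro Q hQ _
      have hQsub := (hprops Q (Finset.mem_coe.1 hQ)).1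
      rw [Finset.disjoint_left]
      intro x hxP hxQ
      have hmem := hQsub hxQ
      rw [Finset.mem_sdiff] at hmem
      exact hmem.2 hxP

theorem stmt4 (s l n : ℕ) (hl1 : 1 ≤ l) (hls : l < s) (hn : n = 2 * s - l)
    (F : Finset (Finset (Fin n)))
    (hup : ∀ A ∈ F, ∀ B : Finset (Fin n), A ⊆ B → B ∈ F)
    (hnu : ¬ HasMatching F s) :
    2 * (s - l) + 2 ≤ ((Finset.univ : Finset (Finset (Fin n))) \ F).card := by
  by_contra hcard
  push_neg at hcard
  apply hnu
  classical
  set m := s - l with hm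
  set B : Finset (Fin n) := Finset.univ.filter (fun x => ({x} : Finset (Fin n)) ∉ F)
    with hBdef
  set bad : Finset (Finset (Fin n)) := (B.powersetCard 2).filter (fun P => P ∉ F)
    with hbaddef
  have hmain : B.card + bad.card ≤ 2 * m := by
    by_cases h0 : (∅ : Finset (Fin n)) ∈ F
    · have hall : ∀ A : Finset (Fin n), A ∈ F := fun A => hup ∅ h0 A (Finset.empty_subset A)
      have hB : B = ∅ := by
        rw [Finset.eq_empty_iff_forall_notMem]; intro x hx
        exact (Finset.mem_filter.1 hx).2 (hall _)
      have hbadE : bad = ∅ := by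
        rw [Finset.eq_empty_iff_forall_notMem]; intro P hP
        exact (Finset.mem_filter.1 hP).2 (hall _)
      simp [hB, hbadE]
    · set X : Finset (Finset (Fin n)) :=
        insert ∅ (B.image (fun x => ({x} : Finset (Fin n))) ∪ bad) with hXdef
      have hXsub : X ⊆ Finset.univ \ F := by
        intro A hA
        rw [Finset.mem_sdiff]
        refine ⟨Finset.mem_univ _, ?_⟩
        rcases Finset.mem_insert.1 hA with rfl | h
        · exact h0
        · rcases Finset.mem_union.1 h with h | h
          · obtain ⟨x, hx, rfl⟩ := Finset.mem_image.1 h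
            exact (Finset.mem_filter.1 hx).2
          · exact (Finset.mem_filter.1 h).2
      have hcardX : X.card = 1 + (B.card + bad.card) := by
        have hdisj1 : Disjoint (B.image (fun x => ({x} : Finset (Fin n)))) bad := by
          rw [Finset.disjoint_left]
          intro A hA hA'
          obtain ⟨x, hx, rfl⟩ := Finset.mem_image.1 hA
          have h2 := (Finset.mem_powersetCard.1 (Finset.mem_filter.1 hA').1).2
          simp at h2
        have hnotmem : (∅ : Finset (Fin n)) ∉ B.image (fun x => ({x} : Finset (Fin n))) ∪ bad := by
          intro h
          rcases Finset.mem_union.1 h with h | h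
          · obtain ⟨x, _, hxx⟩ := Finset.mem_image.1 h
            exact Finset.singleton_ne_empty x hxx
          · have h2 := (Finset.mem_powersetCard.1 (Finset.mem_filter.1 h).1).2
            simp at h2
        rw [hXdef, Finset.card_insert_of_notMem hnotmem, Finset.card_union_of_disjoint hdisj1,
          Finset.card_image_of_injective _ Finset.singleton_injective]
        omega
      have hle := Finset.card_le_card hXsub
      omega
  set c := B.card - m with hc
  obtain ⟨PP, hPPcard, hPPprops, hPPpair⟩ :
      ∃ PP : Finset (Finset (Fin n)), PP.card = c ∧
        (∀ P ∈ PP, P ⊆ B ∧ P.card = 2 ∧ P ∈ F) ∧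
        (PP : Set (Finset (Fin n))).Pairwise Disjoint := by
    by_cases hbm : m ≤ B.card
    · exact pairs_lemma F c m B (by omega) (by rw [← hbaddef]; omega)
    · have hc0 : c = 0 := by omega
      rw [hc0]; exact ⟨∅, by simp, by simp, by simp⟩
  have hn' : n = 2 * m + l := by omega
  obtain ⟨T, hTsub, hTcard⟩ : ∃ T ⊆ Bᶜ, T.card = m + l - c := by
    apply Finset.exists_subset_card_eq
    rw [Finset.card_compl]
    simp only [Fintype.card_fin]
    omega
  have hsingF : ∀ x ∈ T, ({x} : Finset (Fin n)) ∈ F := by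
    intro x hx
    have hxB : x ∉ B := Finset.mem_compl.1 (hTsub hx)
    by_contra h
    exact hxB (Finset.mem_filter.2 ⟨Finset.mem_univ x, h⟩)
  refine ⟨PP ∪ T.image (fun x => ({x} : Finset (Fin n))), ?_, ?_, ?_⟩
  · intro A hA
    rcases Finset.mem_union.1 hA with h | h
    · exact (hPPprops A h).2.2
    · obtain ⟨x, hx, rfl⟩ := Finset.mem_image.1 h
      exact hsingF x hx
  · have hdisj : Disjoint PP (T.image (fun x => ({x} : Finset (Fin n)))) := by
      rw [Finset.disjoint_left]
      intro A hA hA'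
      obtain ⟨x, hx, rfl⟩ := Finset.mem_image.1 hA'
      have h2 := (hPPprops _ hA).2.1
      simp at h2
    rw [Finset.card_union_of_disjoint hdisj, hPPcard,
      Finset.card_image_of_injective _ Finset.singleton_injective, hTcard]
    omega
  · intro A₁ h₁ A₂ h₂ hne
    have h₁' := Finset.mem_coe.1 h₁
    have h₂' := Finset.mem_coe.1 h₂
    have key : ∀ P x, P ∈ PP → x ∈ T → Disjoint P ({x} : Finset (Fin n)) := by
      intro P x hP hx
      rw [Finset.disjoint_singleton_right]
      intro hxP
      exact (Finset.mem_compl.1 (hTsub hx)) ((hPPprops P hP).1 hxP)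
    rcases Finset.mem_union.1 h₁' with ha | ha <;> rcases Finset.mem_union.1 h₂' with hb | hb
    · exact hPPpair (Finset.mem_coe.2 ha) (Finset.mem_coe.2 hb) hne
    · obtain ⟨x, hx, rfl⟩ := Finset.mem_image.1 hb
      exact key A₁ x ha hx
    · obtain ⟨x, hx, rfl⟩ := Finset.mem_image.1 ha
      exact (key A₂ x hb hx).symm
    · obtain ⟨x, hx, rfl⟩ := Finset.mem_image.1 ha
      obtain ⟨y, hy, rfl⟩ := Finset.mem_image.1 hb
      rw [Finset.disjoint_singleton_right, Finset.mem_singleton]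
      intro h
      exact hne (by rw [h])
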